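/- If x and y are two initial inventory vectors with x_i ≥ y_i for every 1 ≤ i ≤ m−1, then for every real z, P(D^m(x) ≤ z) ≤ P(D^m(y) ≤ z); that is, D^m(x) first-order stochastically dominates D^m(y). -/

import Mathlib

open MeasureTheory ProbabilityTheory

/-- The effective-demand recursion: `e 1 = d 1` and
`e (i+1) = max (e i) (s i) + d (i+1)`, where `s i = x 1 + ⋯ + x i`. -/
noncomputable def effDemand (d x : ℕ → ℝ) : ℕ → ℝ
  | 0 => 0
  | 1 => d 1
  | (n + 2) => max (effDemand d x (n + 1)) (∑ j ∈ Finset.Icc 1 (n + 1), x j) + d (n + 2)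

/-- If x_i ≥ y_i for every 1 ≤ i ≤ m−1, then for every real z,
P(D^m(x) ≤ z) ≤ P(D^m(y) ≤ z); i.e., D^m(x) first-order stochastically dominates D^m(y). -/
theorem stmt_7 {Ω : Type*} [MeasurableSpace Ω] (μ : Measure Ω) [IsProbabilityMeasure μ]
    (m : ℕ) (hm : 1 ≤ m)
    (D : ℕ → Ω → ℝ) (hDmeas : ∀ i, Measurable (D i))
    (hindep : iIndepFun D μ)
    (hident : ∀ i, μ.map (D i) = μ.map (D 1))
    (hDnonneg : ∀ i, ∀ᵐ ω ∂μ, 0 ≤ D i ω)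
    (x y : ℕ → ℝ) (hx : ∀ i, 0 ≤ x i) (hy : ∀ i, 0 ≤ y i)
    (hxy : ∀ i, 1 ≤ i → i ≤ m - 1 → y i ≤ x i) :
    ∀ z : ℝ, μ {ω | effDemand (fun j => D j ω) x m ≤ z}
      ≤ μ {ω | effDemand (fun j => D j ω) y m ≤ z} := by
  intro z
  apply measure_mono
  intro ω hω
  simp only [Set.mem_setOf_eq] at *
  refine le_trans ?_ hω
  have key : ∀ n, n ≤ m →
      effDemand (fun j => D j ω) y n ≤ effDemand (fun j => D j ω) x n := by
    intro n
    induction n with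
    | zero => intro _; simp [effDemand]
    | succ k ih =>
      intro hk
      match k, ih with
      | 0, _ => simp [effDemand]
      | (k + 1), ih =>
        simp only [effDemand]
        apply add_le_add_left
        apply max_le_max (ih (by omega))
        apply Finset.sum_le_sum
        intro j hj
        have h1 := (Finset.mem_Icc.mp hj).1
        have h2 := (Finset.mem_Icc.mp hj).2
        exact hxy j h1 (by omega)
  exact key m le_rfl
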